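/- Let g₃(n) = 2^{s₂(3n)} be the number of odd coefficients of (1+x+x^2+x^3)^n. Then lim_{n→∞} ln(Var(g₃(N)))/ln(n) = ln(5/2)/ln(2), where Var(g₃(N)) = (1/n)∑_{k=0}^{n−1} g₃(k)² − ((1/n)∑_{k=0}^{n−1} g₃(k))². -/

import Mathlib

open Finset Filter Real

private def s (k : ℕ) : ℕ := (Nat.digits 2 k).sum

private lemma s_even (m : ℕ) : s (2*m) = s m := by
  rcases Nat.eq_zero_or_pos m with h | h
  · simp [h, s]
  · unfold s
    rw [Nat.digits_def' (by norm_num) (by omega)]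
    simp [Nat.mul_div_cancel_left _ (by norm_num : 0 < 2)]

private lemma s_odd (m : ℕ) : s (2*m+1) = s m + 1 := by
  unfold s
  rw [Nat.digits_def' (by norm_num) (by omega),
    show (2*m+1)/2 = m from by omega, show (2*m+1)%2 = 1 from by omega]
  simp [Nat.add_comm]

private lemma sum_range_two_mul (f : ℕ → ℕ) (N : ℕ) :
    ∑ k ∈ range (2*N), f k = ∑ q ∈ range N, (f (2*q) + f (2*q+1)) := by
  induction N with
  | zero => simp
  | succ n ih =>
    rw [show 2*(n+1) = (2*n+1)+1 from by ring, Finset.sum_range_succ, Finset.sum_range_succ,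
      ih, Finset.sum_range_succ]
    ring

private def AA (x m : ℕ) : ℕ := ∑ k ∈ range (2^m), x^(s (3*k))
private def BB (x m : ℕ) : ℕ := ∑ k ∈ range (2^m), x^(s (3*k+1))
private def CC (x m : ℕ) : ℕ := ∑ k ∈ range (2^m), x^(s (3*k+2))

private lemma AA_succ (x m : ℕ) : AA x (m+1) = AA x m + x * BB x m := by
  unfold AA BB
  rw [pow_succ, mul_comm ((2:ℕ)^m) 2, sum_range_two_mul, Finset.sum_add_distrib, Finset.mul_sum]
  congr 1
  · exact Finset.sum_congr rfl fun q _ => by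
      rw [show 3*(2*q) = 2*(3*q) from by ring, s_even]
  · exact Finset.sum_congr rfl fun q _ => by
      rw [show 3*(2*q+1) = 2*(3*q+1)+1 from by ring, s_odd, pow_succ, mul_comm]

private lemma BB_succ (x m : ℕ) : BB x (m+1) = x * AA x m + CC x m := by
  unfold AA BB CC
  rw [pow_succ, mul_comm ((2:ℕ)^m) 2, sum_range_two_mul, Finset.sum_add_distrib, Finset.mul_sum]
  congr 1
  · exact Finset.sum_congr rfl fun q _ => by
      rw [show 3*(2*q)+1 = 2*(3*q)+1 from by ring, s_odd, pow_succ, mul_comm]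
  · exact Finset.sum_congr rfl fun q _ => by
      rw [show 3*(2*q+1)+1 = 2*(3*q+2) from by ring, s_even]

private lemma CC_succ (x m : ℕ) : CC x (m+1) = BB x m + x * CC x m := by
  unfold BB CC
  rw [pow_succ, mul_comm ((2:ℕ)^m) 2, sum_range_two_mul, Finset.sum_add_distrib, Finset.mul_sum]
  congr 1
  · exact Finset.sum_congr rfl fun q _ => by
      rw [show 3*(2*q)+2 = 2*(3*q+1) from by ring, s_even]
  · exact Finset.sum_congr rfl fun q _ => by
      rw [show 3*(2*q+1)+2 = 2*(3*q+2)+1 from by ring, s_odd, pow_succ, mul_comm]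

private lemma ABC2 (m : ℕ) : AA 2 m + BB 2 m + CC 2 m = 5 * 3^m := by
  induction m with
  | zero => simp [AA, BB, CC, s]
  | succ n ih => rw [AA_succ, BB_succ, CC_succ, pow_succ]; omega

private lemma ABC4 (m : ℕ) : AA 4 m + BB 4 m + CC 4 m = 9 * 5^m := by
  induction m with
  | zero => simp [AA, BB, CC, s]
  | succ n ih => rw [AA_succ, BB_succ, CC_succ, pow_succ]; omega

private lemma ABC4_low (m : ℕ) : 5^m ≤ AA 4 m ∧ 5^m ≤ BB 4 m ∧ 5^m ≤ CC 4 m := by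
  induction m with
  | zero => simp [AA, BB, CC, s]
  | succ n ih =>
    obtain ⟨h1, h2, h3⟩ := ih
    refine ⟨?_, ?_, ?_⟩ <;> [rw [AA_succ]; rw [BB_succ]; rw [CC_succ]] <;> rw [pow_succ] <;> omega

private lemma Sa_lower (n : ℕ) (h : 1 ≤ n) : 5^(Nat.log 2 n) ≤ ∑ k ∈ range n, 4^(s (3*k)) := by
  refine le_trans (ABC4_low _).1 (Finset.sum_le_sum_of_subset ?_)
  exact Finset.range_subset_range.2 (Nat.pow_log_le_self 2 (by omega))

private lemma Sa_upper (n : ℕ) : ∑ k ∈ range n, 4^(s (3*k)) ≤ 45 * 5^(Nat.log 2 n) := by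
  have h1 : ∑ k ∈ range n, 4^(s (3*k)) ≤ AA 4 (Nat.log 2 n + 1) :=
    Finset.sum_le_sum_of_subset (Finset.range_subset_range.2 (Nat.lt_pow_succ_log_self (by norm_num) n).le)
  have h2 := ABC4 (Nat.log 2 n + 1)
  rw [pow_succ] at h2
  omega

private lemma Sb_upper (n : ℕ) : ∑ k ∈ range n, 2^(s (3*k)) ≤ 15 * 3^(Nat.log 2 n) := by
  have h1 : ∑ k ∈ range n, 2^(s (3*k)) ≤ AA 2 (Nat.log 2 n + 1) :=
    Finset.sum_le_sum_of_subset (Finset.range_subset_range.2 (Nat.lt_pow_succ_log_self (by norm_num) n).le)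
  have h2 := ABC2 (Nat.log 2 n + 1)
  rw [pow_succ] at h2
  omega

private lemma rpow_pow_eq {y c : ℝ} (h : (2:ℝ)^y = c) (m : ℕ) : ((2:ℝ)^m)^y = c^m := by
  rw [← Real.rpow_natCast 2 m, ← Real.rpow_mul (by norm_num), mul_comm,
    Real.rpow_mul (by norm_num), h, Real.rpow_natCast]

private lemma per_n (α β : ℝ) (hα_pos : 0 < α) (hβ_pos : 0 < β)
    (h2α : (2:ℝ)^α = 5) (h2β : (2:ℝ)^β = 3)
    (n m : ℕ) (Sa Sb : ℝ)
    (hml : (2:ℝ)^m ≤ (n:ℝ)) (hmu : (n:ℝ) < 2^(m+1))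
    (hSa1 : (5:ℝ)^m ≤ Sa) (hSa2 : Sa ≤ 45 * 5^m)
    (hSb1 : (0:ℝ) ≤ Sb) (hSb2 : Sb ≤ 15 * 3^m)
    (hEn : 2250 ≤ (n:ℝ)^(α+1-2*β)) :
    (1/10) * (n:ℝ)^(α-1) ≤ (1/(n:ℝ)) * Sa - ((1/(n:ℝ)) * Sb)^2 ∧
      (1/(n:ℝ)) * Sa - ((1/(n:ℝ)) * Sb)^2 ≤ 45 * (n:ℝ)^(α-1) := by
  have hn0 : (0:ℝ) < n := lt_of_lt_of_le (by norm_num) hml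
  have hXpos : (0:ℝ) < (n:ℝ)^α := Real.rpow_pos_of_pos hn0 α
  have hPpos : (0:ℝ) < (n:ℝ)^(2*β) := Real.rpow_pos_of_pos hn0 (2*β)
  have key1 : (5:ℝ)^m ≤ (n:ℝ)^α := by
    rw [← rpow_pow_eq h2α]
    exact Real.rpow_le_rpow (by positivity) hml hα_pos.le
  have key2 : (n:ℝ)^α ≤ 5 * 5^m := by
    have := Real.rpow_le_rpow (by positivity) hmu.le hα_pos.le
    rwa [rpow_pow_eq h2α, pow_succ, mul_comm ((5:ℝ)^m) 5] at this
  have key3 : (3:ℝ)^m ≤ (n:ℝ)^β := by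
    rw [← rpow_pow_eq h2β]
    exact Real.rpow_le_rpow (by positivity) hml hβ_pos.le
  have hA1 : (n:ℝ)^α / 5 ≤ Sa := by linarith
  have hA2 : Sa ≤ 45 * (n:ℝ)^α := by linarith
  have hB2 : Sb ≤ 15 * (n:ℝ)^β := by linarith
  have eα1 : (n:ℝ)^(α-1) = (n:ℝ)^α / n := by
    rw [Real.rpow_sub hn0, Real.rpow_one]
  have h2250 : 2250 * (n:ℝ)^(2*β) ≤ (n:ℝ)^α * n := by
    have e1 : (n:ℝ)^(α+1-2*β) * (n:ℝ)^(2*β) = (n:ℝ)^α * (n:ℝ) := by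
      rw [← Real.rpow_add hn0, show α+1-2*β+2*β = α+1 by ring, Real.rpow_add hn0,
        Real.rpow_one]
    nlinarith [mul_le_mul_of_nonneg_right hEn hPpos.le]
  have hsq : ((1/(n:ℝ)) * Sb)^2 ≤ 225 * (n:ℝ)^(2*β) / (n:ℝ)^2 := by
    have e2 : ((n:ℝ)^β)^2 = (n:ℝ)^(2*β) := by
      rw [show 2*β = β+β by ring, Real.rpow_add hn0]; ring
    have h1 : Sb^2 ≤ 225 * (n:ℝ)^(2*β) := by
      nlinarith [Real.rpow_pos_of_pos hn0 β]
    have h2 : ((1/(n:ℝ))*Sb)^2 = Sb^2/(n:ℝ)^2 := by field_simp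
    rw [h2]
    gcongr
  have hfrac : 225 * (n:ℝ)^(2*β)/(n:ℝ)^2 ≤ (n:ℝ)^α/(10*n) := by
    rw [div_le_div_iff₀ (by positivity) (by positivity)]
    nlinarith [mul_le_mul_of_nonneg_right h2250 hn0.le]
  have l1 : (n:ℝ)^α/5/(n:ℝ) ≤ (1/(n:ℝ))*Sa := by
    rw [one_div, inv_mul_eq_div]
    gcongr
  have e3 : (n:ℝ)^α/5/(n:ℝ) = (n:ℝ)^α/(5*n) := by ring
  have e4 : (1/10)*(n:ℝ)^(α-1) = (n:ℝ)^α/(10*n) := by rw [eα1]; ring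
  have e5 : (n:ℝ)^α/(5*(n:ℝ)) = (n:ℝ)^α/(10*n) + (n:ℝ)^α/(10*n) := by ring
  constructor
  · linarith
  · have u1 : Sa/(n:ℝ) ≤ 45*(n:ℝ)^α/(n:ℝ) := by gcongr
    have e6 : (1/(n:ℝ))*Sa = Sa/(n:ℝ) := by ring
    have e7 : 45*(n:ℝ)^(α-1) = 45*(n:ℝ)^α/(n:ℝ) := by rw [eα1]; ring
    linarith [sq_nonneg ((1/(n:ℝ))*Sb)]

theorem quadrinomial_average_dispersion :
    Filter.Tendsto
      (fun n : ℕ =>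
        Real.log
            ((1 / (n : ℝ)) *
                (∑ k ∈ Finset.range n, ((2 : ℝ) ^ (Nat.digits 2 (3 * k)).sum) ^ 2)
              - ((1 / (n : ℝ)) *
                  ∑ k ∈ Finset.range n, (2 : ℝ) ^ (Nat.digits 2 (3 * k)).sum) ^ 2)
          / Real.log n)
      Filter.atTop (nhds (Real.log (5 / 2) / Real.log 2)) := by
  have hl2 : (0:ℝ) < Real.log 2 := Real.log_pos (by norm_num)
  set α := Real.logb 2 5 with hαdef
  set β := Real.logb 2 3 with hβdef
  have h2α : (2:ℝ) ^ α = 5 := Real.rpow_logb (by norm_num) (by norm_num) (by norm_num)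
  have h2β : (2:ℝ) ^ β = 3 := Real.rpow_logb (by norm_num) (by norm_num) (by norm_num)
  have hα_pos : 0 < α := Real.logb_pos (by norm_num) (by norm_num)
  have hβ_pos : 0 < β := Real.logb_pos (by norm_num) (by norm_num)
  have hc_pos : 0 < α + 1 - 2*β := by
    have h10 : Real.log 10 = Real.log 5 + Real.log 2 := by
      rw [show (10:ℝ) = 5*2 by norm_num, Real.log_mul (by norm_num) (by norm_num)]
    have h9 : Real.log 9 = 2 * Real.log 3 := by
      rw [show (9:ℝ) = 3^2 by norm_num, Real.log_pow]; push_cast; ring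
    have hlt := Real.log_lt_log (by norm_num : (0:ℝ) < 9) (by norm_num : (9:ℝ) < 10)
    have heq : α + 1 - 2*β = (Real.log 5 + Real.log 2 - 2*Real.log 3)/Real.log 2 := by
      simp only [hαdef, hβdef, Real.logb]; field_simp
    rw [heq]
    exact div_pos (by linarith) hl2
  have hgoal : Real.log (5/2) / Real.log 2 = α - 1 := by
    simp only [hαdef, Real.logb]
    rw [Real.log_div (by norm_num) (by norm_num), sub_div, div_self hl2.ne']
  rw [hgoal]
  -- the expression
  set E : ℕ → ℝ := fun n =>
    (1 / (n : ℝ)) * (∑ k ∈ Finset.range n, ((2 : ℝ) ^ (Nat.digits 2 (3 * k)).sum) ^ 2)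
      - ((1 / (n : ℝ)) * ∑ k ∈ Finset.range n, (2 : ℝ) ^ (Nat.digits 2 (3 * k)).sum) ^ 2
    with hEdef
  have hlog : Tendsto (fun n : ℕ => Real.log n) atTop atTop :=
    Real.tendsto_log_atTop.comp tendsto_natCast_atTop_atTop
  have hEn : ∀ᶠ n : ℕ in atTop, 2250 ≤ (n:ℝ)^(α+1-2*β) :=
    ((tendsto_rpow_atTop hc_pos).comp tendsto_natCast_atTop_atTop).eventually_ge_atTop 2250
  have hbounds : ∀ᶠ n : ℕ in atTop,
      (1/10)*(n:ℝ)^(α-1) ≤ E n ∧ E n ≤ 45*(n:ℝ)^(α-1) := by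
    filter_upwards [hEn, eventually_ge_atTop 2] with n h2250 hn2
    have hml : (2:ℝ)^(Nat.log 2 n) ≤ (n:ℝ) := by
      exact_mod_cast Nat.pow_log_le_self 2 (by omega)
    have hmu : (n:ℝ) < 2^(Nat.log 2 n + 1) := by
      exact_mod_cast Nat.lt_pow_succ_log_self (by norm_num) n
    have hSa1 : (5:ℝ)^(Nat.log 2 n) ≤ ((∑ k ∈ range n, 4^(s (3*k)) : ℕ) : ℝ) := by
      exact_mod_cast Sa_lower n (by omega)
    have hSa2 : ((∑ k ∈ range n, 4^(s (3*k)) : ℕ) : ℝ) ≤ 45 * 5^(Nat.log 2 n) := by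
      exact_mod_cast Sa_upper n
    have hSb1 : (0:ℝ) ≤ ((∑ k ∈ range n, 2^(s (3*k)) : ℕ) : ℝ) := by positivity
    have hSb2 : ((∑ k ∈ range n, 2^(s (3*k)) : ℕ) : ℝ) ≤ 15 * 3^(Nat.log 2 n) := by
      exact_mod_cast Sb_upper n
    have hmain := per_n α β hα_pos hβ_pos h2α h2β n (Nat.log 2 n) _ _
      hml hmu hSa1 hSa2 hSb1 hSb2 h2250
    have hca : ∑ k ∈ Finset.range n, ((2 : ℝ) ^ (Nat.digits 2 (3 * k)).sum) ^ 2
        = ((∑ k ∈ range n, 4^(s (3*k)) : ℕ) : ℝ) := by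
      push_cast
      refine Finset.sum_congr rfl fun k _ => ?_
      show ((2:ℝ) ^ (s (3*k)))^2 = (4:ℝ) ^ (s (3*k))
      rw [← pow_mul, show (4:ℝ) = 2^2 by norm_num, ← pow_mul, Nat.mul_comm]
    have hcb : ∑ k ∈ Finset.range n, (2 : ℝ) ^ (Nat.digits 2 (3 * k)).sum
        = ((∑ k ∈ range n, 2^(s (3*k)) : ℕ) : ℝ) := by
      push_cast
      rfl
    rw [hEdef]
    simp only [hca, hcb]
    exact hmain
  apply tendsto_of_tendsto_of_tendsto_of_le_of_le'
    (g := fun n : ℕ => Real.log (1/10)/Real.log n + (α-1))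
    (h := fun n : ℕ => Real.log 45/Real.log n + (α-1))
  · simpa using (tendsto_const_nhds.div_atTop hlog).add (tendsto_const_nhds (x := α-1))
  · simpa using (tendsto_const_nhds.div_atTop hlog).add (tendsto_const_nhds (x := α-1))
  · filter_upwards [hbounds, eventually_ge_atTop 2] with n hb hn2
    have hn1 : (1:ℝ) < (n:ℝ) := by exact_mod_cast (by omega : 1 < n)
    have hn0 : (0:ℝ) < (n:ℝ) := by linarith
    have hlogn : 0 < Real.log n := Real.log_pos hn1
    have hlo := hb.1
    have hlog1 : Real.log ((1/10)*(n:ℝ)^(α-1)) ≤ Real.log (E n) :=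
      Real.log_le_log (by positivity) hlo
    rw [Real.log_mul (by norm_num) (by positivity), Real.log_rpow hn0] at hlog1
    have hdiv : (Real.log (1/10) + (α-1)*Real.log n)/Real.log n
        = Real.log (1/10)/Real.log n + (α-1) := by
      rw [add_div, mul_div_assoc, div_self hlogn.ne', mul_one]
    rw [← hdiv]
    gcongr
  · filter_upwards [hbounds, eventually_ge_atTop 2] with n hb hn2
    have hn1 : (1:ℝ) < (n:ℝ) := by exact_mod_cast (by omega : 1 < n)
    have hn0 : (0:ℝ) < (n:ℝ) := by linarith
    have hlogn : 0 < Real.log n := Real.log_pos hn1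
    have hE0 : 0 < E n := lt_of_lt_of_le (by positivity) hb.1
    have hlog1 : Real.log (E n) ≤ Real.log (45*(n:ℝ)^(α-1)) :=
      Real.log_le_log hE0 hb.2
    rw [Real.log_mul (by norm_num) (by positivity), Real.log_rpow hn0] at hlog1
    have hdiv : (Real.log 45 + (α-1)*Real.log n)/Real.log n
        = Real.log 45/Real.log n + (α-1) := by
      rw [add_div, mul_div_assoc, div_self hlogn.ne', mul_one]
    rw [← hdiv]
    gcongr
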